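/- Let G be a finite connected simple graph with n vertices and m edges, and let k be a natural number with m ≥ n·k. Then every DFS tree of G (rooted at any vertex) has height at least k; equivalently, it contains a root-to-leaf path with at least k+1 vertices. -/

import Mathlib

/-- `u` lies on the unique path in `T` from `r` to `v`
(characterized in a tree via distances). -/
def IsAncestor {V : Type*} (T : SimpleGraph V) (r u v : V) : Prop :=
  T.dist r u + T.dist u v = T.dist r v

/-- `u` and `v` are comparable in the rooted tree `(T, r)`. -/
def TreeComparable {V : Type*} (T : SimpleGraph V) (r u v : V) : Prop :=
  IsAncestor T r u v ∨ IsAncestor T r v u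

/-- `(T, r)` is a DFS tree of `G`. -/
def IsDFSTree {V : Type*} (G T : SimpleGraph V) (r : V) : Prop :=
  T ≤ G ∧ T.IsTree ∧ ∀ u v : V, G.Adj u v → TreeComparable T r u v

/-- In a tree, an ancestor of `v` at a given depth is unique. -/
lemma anc_unique {V : Type*} {T : SimpleGraph V} (ht : T.IsTree) {r u₁ u₂ v : V}
    (h1 : IsAncestor T r u₁ v) (h2 : IsAncestor T r u₂ v)
    (hd : T.dist r u₁ = T.dist r u₂) : u₁ = u₂ := by
  have hc := ht.isConnected
  obtain ⟨p1, hp1⟩ := hc.exists_walk_length_eq_dist r u₁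
  obtain ⟨q1, hq1⟩ := hc.exists_walk_length_eq_dist u₁ v
  obtain ⟨p2, hp2⟩ := hc.exists_walk_length_eq_dist r u₂
  obtain ⟨q2, hq2⟩ := hc.exists_walk_length_eq_dist u₂ v
  have hw1 : (p1.append q1).length = T.dist r v := by
    rw [SimpleGraph.Walk.length_append, hp1, hq1]; exact h1
  have hw2 : (p2.append q2).length = T.dist r v := by
    rw [SimpleGraph.Walk.length_append, hp2, hq2]; exact h2
  have he : p1.append q1 = p2.append q2 :=
    (ht.existsUnique_path r v).unique ((p1.append q1).isPath_of_length_eq_dist hw1)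
      ((p2.append q2).isPath_of_length_eq_dist hw2)
  have g1 : (p1.append q1).getVert (T.dist r u₁) = u₁ := by
    rw [SimpleGraph.Walk.getVert_append, hp1]
    simp
  have g2 : (p2.append q2).getVert (T.dist r u₂) = u₂ := by
    rw [SimpleGraph.Walk.getVert_append, hp2]
    simp
  rw [← g1, ← g2, he, hd]

lemma anc_of_adj {V : Type*} {G T : SimpleGraph V} {r u v : V} (h : IsDFSTree G T r)
    (ha : G.Adj u v) (hlt : T.dist r u < T.dist r v) : IsAncestor T r u v := by
  rcases h.2.2 u v ha with h' | h'
  · exact h'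
  · exfalso
    have hpos : 0 < T.dist v u := h.2.1.isConnected.pos_dist_of_ne ha.ne.symm
    unfold IsAncestor at h'
    omega

lemma adj_dist_ne {V : Type*} {G T : SimpleGraph V} {r u v : V} (h : IsDFSTree G T r)
    (ha : G.Adj u v) : T.dist r u ≠ T.dist r v := by
  have hpos : 0 < T.dist u v := h.2.1.isConnected.pos_dist_of_ne ha.ne
  have hpos' : 0 < T.dist v u := h.2.1.isConnected.pos_dist_of_ne ha.ne.symm
  rcases h.2.2 u v ha with h' | h' <;> unfold IsAncestor at h' <;> omega

/-- Let `G` be a finite connected simple graph with `n` vertices and `m` edges, and `k` a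
natural number with `m ≥ n·k`. Then every DFS tree of `G` (rooted at any vertex) has height
at least `k`. -/
theorem stmt2 {V : Type*} [Fintype V] (G : SimpleGraph V) [Fintype G.edgeSet]
    (hG : G.Connected) (k : ℕ) (hm : Fintype.card V * k ≤ G.edgeFinset.card)
    (T : SimpleGraph V) (r : V) (h : IsDFSTree G T r) :
    k ≤ Finset.univ.sup fun v : V => T.dist r v := by
  classical
  set H := Finset.univ.sup fun v : V => T.dist r v with hH
  set S : Finset (V × V) :=
    Finset.univ.filter (fun p => G.Adj p.1 p.2 ∧ T.dist r p.1 < T.dist r p.2) with hS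
  -- edge count equals |S|
  have hcard : S.card = G.edgeFinset.card := by
    apply Finset.card_bij (s := S) (t := G.edgeFinset) (fun e _ => s(e.1, e.2))
    · rintro ⟨u, v⟩ hp
      simp only [hS, Finset.mem_filter] at hp
      simpa using hp.2.1
    · rintro ⟨u, v⟩ hp ⟨u', v'⟩ hp' he
      simp only [hS, Finset.mem_filter] at hp hp'
      rw [Sym2.eq_iff] at he
      rcases he with ⟨rfl, rfl⟩ | ⟨rfl, rfl⟩
      · rfl
      · exfalso; dsimp only at hp hp'; omega
    · intro e he
      rw [SimpleGraph.mem_edgeFinset] at he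
      induction e with
      | _ u v =>
        have ha : G.Adj u v := he
        rcases lt_or_gt_of_ne (adj_dist_ne h ha) with hlt | hlt
        · exact ⟨(u, v), by simp [hS, ha, hlt], rfl⟩
        · exact ⟨(v, u), by simp [hS, ha.symm, hlt], Sym2.eq_swap⟩
  -- inject S into univ ×ˢ range H
  have hinj : S.card ≤ ((Finset.univ : Finset V) ×ˢ Finset.range H).card := by
    refine Finset.card_le_card_of_injOn (fun p : V × V => (p.2, T.dist r p.1)) ?_ ?_
    · rintro ⟨u, v⟩ hp
      simp only [hS, Finset.mem_coe, Finset.mem_filter] at hp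
      have : T.dist r v ≤ H := Finset.le_sup (Finset.mem_univ v)
      simp only [Finset.mem_coe, Finset.mem_product, Finset.mem_univ, Finset.mem_range, true_and]
      omega
    · rintro ⟨u, v⟩ hp ⟨u', v'⟩ hp' he
      simp only [hS, Finset.mem_coe, Finset.mem_filter] at hp hp'
      simp only [Prod.mk.injEq] at he
      obtain ⟨rfl, hd⟩ := he
      have := anc_unique h.2.1 (anc_of_adj h hp.2.1 hp.2.2) (anc_of_adj h hp'.2.1 hp'.2.2) hd
      simp [this]
  have hcard2 : ((Finset.univ : Finset V) ×ˢ Finset.range H).card = Fintype.card V * H := by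
    rw [Finset.card_product, Finset.card_range, Finset.card_univ]
  have hn : 0 < Fintype.card V := Fintype.card_pos_iff.mpr hG.nonempty
  have hfinal : Fintype.card V * k ≤ Fintype.card V * H :=
    le_trans hm (by rw [← hcard]; exact hinj.trans_eq hcard2)
  exact Nat.le_of_mul_le_mul_left hfinal hn
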